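/- Let X be a Hausdorff locally convex space and 𝒮 ⊆ L(X) a subsemigroup that is left amenable for the topology of pointwise convergence and has relatively compact convex orbits, i.e., {Tx : T ∈ co 𝒮} is relatively compact in X for every x ∈ X. Then for a net (T_α) in K(co 𝒮) the following are equivalent: (i) (T_α) is a left ergodic net for 𝒮; (ii) every cluster point of (T_α) in the topology of pointwise convergence belongs to ker(K(co 𝒮)). -/

import Mathlib

set_option linter.unusedSectionVars false


open Filter Topology Set

namespace Stmt17

variable {X : Type*} [AddCommGroup X] [Module ℂ X] [TopologicalSpace X]
  [IsTopologicalAddGroup X] [ContinuousSMul ℂ X] [T2Space X] [LocallyConvexSpace ℝ X]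

/-- The underlying functions of a set of continuous linear operators. -/
def carrier (S : Set (X →L[ℂ] X)) : Set (X → X) :=
  (fun T : X →L[ℂ] X => (T : X → X)) '' S

/-- The convex hull `co 𝒮` of the operator set, taken inside `X → X`. -/
noncomputable def convS (S : Set (X →L[ℂ] X)) : Set (X → X) :=
  convexHull ℝ (carrier S)

/-- The Köhler semigroup `K(co 𝒮)`: the closure of `co 𝒮` in `X → X` with the
topology of pointwise convergence. -/
noncomputable def KohlerConv (S : Set (X →L[ℂ] X)) : Set (X → X) :=
  closure (convS S)

/-- Left amenability of a set of maps `A ⊆ X → X`, viewed as a semigroup under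
composition with the topology of pointwise convergence. -/
def IsLeftAmenableSet (A : Set (X → X)) : Prop :=
  ∃ m : BoundedContinuousFunction A ℝ →ₗ[ℝ] ℝ,
    (∀ f : BoundedContinuousFunction A ℝ, (∀ t, 0 ≤ f t) → 0 ≤ m f) ∧
    m 1 = 1 ∧
    ∀ (s : A) (f g : BoundedContinuousFunction A ℝ),
      (∀ (t : A) (h : (s : X → X) ∘ (t : X → X) ∈ A),
        g t = f ⟨(s : X → X) ∘ (t : X → X), h⟩) →
      m g = m f

/-- `I` is a (two-sided) ideal of the semigroup `G ⊆ X → X` under composition. -/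
def IsIdealOf (G I : Set (X → X)) : Prop :=
  I.Nonempty ∧ I ⊆ G ∧ ∀ a ∈ G, ∀ b ∈ I, a ∘ b ∈ I ∧ b ∘ a ∈ I

/-- The kernel of a semigroup `G ⊆ X → X`: the intersection of all its ideals. -/
def semigroupKernel (G : Set (X → X)) : Set (X → X) :=
  ⋂₀ {I | IsIdealOf G I}

/-! ### Auxiliary material -/

/-- Real scalar multiplication on `X` is continuous. -/
instance realContinuousSMul : ContinuousSMul ℝ X := by
  refine ⟨?_⟩
  have h : (fun p : ℝ × X => p.1 • p.2) = fun p : ℝ × X => ((p.1 : ℂ) • p.2) := rfl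
  rw [h]
  exact (Complex.continuous_ofReal.comp continuous_fst).smul continuous_snd

lemma carrier_comp {S : Set (X →L[ℂ] X)} (hsemi : ∀ a ∈ S, ∀ b ∈ S, a ∘L b ∈ S)
    {a b : X → X} (ha : a ∈ carrier S) (hb : b ∈ carrier S) : a ∘ b ∈ carrier S := by
  obtain ⟨A, hA, rfl⟩ := ha
  obtain ⟨B, hB, rfl⟩ := hb
  exact ⟨A ∘L B, hsemi A hA B hB, rfl⟩

lemma carrier_subset_K {S : Set (X →L[ℂ] X)} : carrier S ⊆ KohlerConv S :=
  (subset_convexHull ℝ _).trans subset_closure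

lemma K_isClosed (S : Set (X →L[ℂ] X)) : IsClosed (KohlerConv S) := isClosed_closure

lemma K_convex (S : Set (X →L[ℂ] X)) : Convex ℝ (KohlerConv S) :=
  (convex_convexHull ℝ _).closure

lemma K_orbit_mem {S : Set (X →L[ℂ] X)} {f : X → X} (hf : f ∈ KohlerConv S) (x : X) :
    f x ∈ closure ((fun R : X → X => R x) '' convS S) :=
  image_closure_subset_closure_image (continuous_apply x) ⟨f, hf, rfl⟩

lemma K_compact {S : Set (X →L[ℂ] X)}
    (horb : ∀ x : X, IsCompact (closure ((fun R : X → X => R x) '' convS S))) :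
    IsCompact (KohlerConv S) := by
  refine (isCompact_univ_pi horb).of_isClosed_subset (K_isClosed S) ?_
  intro f hf x _
  exact K_orbit_mem hf x

/-- Composition on the right by an element of `K`. -/
lemma comp_memK {S : Set (X →L[ℂ] X)} (hsemi : ∀ a ∈ S, ∀ b ∈ S, a ∘L b ∈ S)
    {f g : X → X} (hf : f ∈ KohlerConv S) (hg : g ∈ KohlerConv S) :
    f ∘ g ∈ KohlerConv S := by
  -- Step 1: for `s ∈ carrier S` and `g ∈ K`, `s ∘ g ∈ K`.
  have step1 : ∀ s ∈ carrier S, ∀ h ∈ KohlerConv S, s ∘ h ∈ KohlerConv S := by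
    rintro _ ⟨A, hA, rfl⟩ h hh
    set Φ : (X → X) →ₗ[ℝ] (X → X) :=
      ((A.restrictScalars ℝ : X →L[ℝ] X) : X →ₗ[ℝ] X).compLeft X with hΦ
    have hΦapp : ∀ u : X → X, Φ u = ⇑A ∘ u := fun u => rfl
    have hΦcont : Continuous Φ := by
      apply continuous_pi
      intro x
      exact A.continuous.comp (continuous_apply x)
    have himg : Φ '' convS S ⊆ convS S := by
      rw [convS, LinearMap.image_convexHull]
      apply convexHull_mono
      rintro _ ⟨s, hs, rfl⟩
      rw [hΦapp]
      exact carrier_comp hsemi ⟨A, hA, rfl⟩ hs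
    have : Φ h ∈ closure (Φ '' convS S) :=
      image_closure_subset_closure_image hΦcont ⟨h, hh, rfl⟩
    rw [hΦapp] at this
    exact closure_mono himg this
  -- Step 2: for `c ∈ convS S` and `g ∈ K`, `c ∘ g ∈ K`.
  have step2 : ∀ c ∈ convS S, c ∘ g ∈ KohlerConv S := by
    intro c hc
    have hZ : convS S ⊆ {c : X → X | c ∘ g ∈ KohlerConv S} := by
      apply convexHull_min
      · intro s hs
        exact step1 s hs g hg
      · intro c₁ h₁ c₂ h₂ a b ha hb hab
        have : (a • c₁ + b • c₂) ∘ g = a • (c₁ ∘ g) + b • (c₂ ∘ g) := rfl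
        simp only [mem_setOf_eq, this]
        exact K_convex S h₁ h₂ ha hb hab
    exact hZ hc
  -- Step 3: general `f ∈ K`.
  have hΨcont : Continuous (fun h : X → X => h ∘ g) := by
    apply continuous_pi
    intro x
    exact continuous_apply (g x)
  have : f ∘ g ∈ closure ((fun h : X → X => h ∘ g) '' convS S) :=
    image_closure_subset_closure_image hΨcont ⟨f, hf, rfl⟩
  have hsub : (fun h : X → X => h ∘ g) '' convS S ⊆ KohlerConv S := by
    rintro _ ⟨c, hc, rfl⟩
    exact step2 c hc
  have := closure_mono hsub this
  rwa [(K_isClosed S).closure_eq] at this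

/-- If all elements of `carrier S` fix the range of `R` pointwise, then so do all
elements of `K`. -/
lemma fixedExtend {S : Set (X →L[ℂ] X)} {R : X → X}
    (hfix : ∀ s ∈ carrier S, ∀ x, s (R x) = R x)
    {f : X → X} (hf : f ∈ KohlerConv S) : ∀ x, f (R x) = R x := by
  have hset : {g : X → X | ∀ x, g (R x) = R x} =
      ⋂ x, {g : X → X | g (R x) = R x} := by
    ext g
    simp [mem_iInter]
  have hclosed : IsClosed {g : X → X | ∀ x, g (R x) = R x} := by
    rw [hset]
    exact isClosed_iInter fun x =>
      isClosed_eq (continuous_apply (R x)) continuous_const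
  have hconv : Convex ℝ {g : X → X | ∀ x, g (R x) = R x} := by
    intro c₁ h₁ c₂ h₂ a b ha hb hab
    intro x
    show a • c₁ (R x) + b • c₂ (R x) = R x
    rw [h₁ x, h₂ x, ← add_smul, hab, one_smul]
  have hsub : KohlerConv S ⊆ {g : X → X | ∀ x, g (R x) = R x} :=
    closure_minimal (convexHull_min hfix hconv) hclosed
  exact hsub hf

/-- Day's fixed point: amenability gives a common fixed point `Q ∈ K` of left
translations by `carrier S`. -/
lemma exists_invariant {S : Set (X →L[ℂ] X)}
    (hsemi : ∀ a ∈ S, ∀ b ∈ S, a ∘L b ∈ S)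
    (hamen : IsLeftAmenableSet (carrier S))
    (horb : ∀ x : X, IsCompact (closure ((fun R : X → X => R x) '' convS S)))
    (hne : (carrier S).Nonempty) :
    ∃ Q ∈ KohlerConv S, ∀ s ∈ carrier S, ∀ x, s (Q x) = Q x := by
  obtain ⟨m, hpos, hone, hinv⟩ := hamen
  -- the bounded continuous functions `s ↦ φ (s x)` on `carrier S`
  have hbdd : ∀ (x : X) (φ : X →L[ℝ] ℝ),
      ∃ C, ∀ s t : carrier S, dist (φ ((s : X → X) x)) (φ ((t : X → X) x)) ≤ C := by
    intro x φ
    have hcpt : IsCompact (⇑φ '' closure ((fun R : X → X => R x) '' convS S)) :=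
      (horb x).image φ.continuous
    have hb : Bornology.IsBounded
        (range fun s : carrier S => φ ((s : X → X) x)) := by
      apply hcpt.isBounded.subset
      rintro _ ⟨s, rfl⟩
      exact ⟨(s : X → X) x,
        subset_closure ⟨s, subset_convexHull ℝ _ s.2, rfl⟩, rfl⟩
    obtain ⟨C, hC⟩ := Metric.isBounded_range_iff.1 hb
    exact ⟨C, hC⟩
  set F : X → (X →L[ℝ] ℝ) → BoundedContinuousFunction (carrier S) ℝ := fun x φ =>
    ⟨⟨fun s => φ ((s : X → X) x),
      φ.continuous.comp ((continuous_apply x).comp continuous_subtype_val)⟩,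
      hbdd x φ⟩ with hF
  have hFapp : ∀ (x : X) (φ : X →L[ℝ] ℝ) (s : carrier S),
      F x φ s = φ ((s : X → X) x) := fun _ _ _ => rfl
  -- the target closed sets
  set Z : X × (X →L[ℝ] ℝ) → Set (X → X) := fun p =>
    {f : X → X | p.2 (f p.1) = m (F p.1 p.2)} with hZ
  have hZclosed : ∀ p, IsClosed (Z p) := by
    intro p
    exact isClosed_eq (p.2.continuous.comp (continuous_apply p.1)) continuous_const
  have hKne : (KohlerConv S).Nonempty := hne.mono carrier_subset_K
  -- finite intersection property
  have hfin : ∀ u : Finset (X × (X →L[ℝ] ℝ)),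
      (KohlerConv S ∩ ⋂ p ∈ u, Z p).Nonempty := by
    intro u
    classical
    set L : (X → X) →ₗ[ℝ] (↥u → ℝ) :=
      LinearMap.pi (fun p : ↥u =>
        ((p : X × (X →L[ℝ] ℝ)).2 : X →ₗ[ℝ] ℝ).comp
          (LinearMap.proj (R := ℝ) (φ := fun _ : X => X)
            (p : X × (X →L[ℝ] ℝ)).1)) with hL
    have hLapp : ∀ (f : X → X) (p : ↥u),
        L f p = (p : X × (X →L[ℝ] ℝ)).2 (f (p : X × (X →L[ℝ] ℝ)).1) :=
      fun _ _ => rfl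
    have hLcont : Continuous L := by
      apply continuous_pi
      intro p
      exact (p : X × (X →L[ℝ] ℝ)).2.continuous.comp (continuous_apply _)
    set D : Set (↥u → ℝ) := ⇑L '' KohlerConv S with hD
    have hDcpt : IsCompact D := (K_compact horb).image hLcont
    have hDconv : Convex ℝ D := (K_convex S).linear_image L
    set v : ↥u → ℝ := fun p =>
      m (F (p : X × (X →L[ℝ] ℝ)).1 (p : X × (X →L[ℝ] ℝ)).2) with hv
    have hvD : v ∈ D := by
      by_contra hvD
      obtain ⟨g, c, hlt, hgt⟩ :=
        geometric_hahn_banach_closed_point hDconv hDcpt.isClosed hvD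
      -- the single-coordinate basis functions
      set e : ↥u → (↥u → ℝ) := fun p => fun q => if p = q then 1 else 0 with he
      have hdecomp : ∀ w : ↥u → ℝ, g w = ∑ p, w p * g (e p) := by
        intro w
        conv_lhs => rw [pi_eq_sum_univ w]
        rw [map_sum]
        congr 1
        funext p
        rw [map_smul, smul_eq_mul]
      -- the bounded continuous function `s ↦ g (L s)`
      have hgbdd : ∃ C, ∀ s t : carrier S,
          dist (g (L ((s : X → X)))) (g (L ((t : X → X)))) ≤ C := by
        have hcpt : IsCompact (⇑g '' D) := hDcpt.image g.continuous
        have hb : Bornology.IsBounded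
            (range fun s : carrier S => g (L ((s : X → X)))) := by
          apply hcpt.isBounded.subset
          rintro _ ⟨s, rfl⟩
          exact ⟨L ((s : X → X)), ⟨(s : X → X), carrier_subset_K s.2, rfl⟩, rfl⟩
        obtain ⟨C, hC⟩ := Metric.isBounded_range_iff.1 hb
        exact ⟨C, hC⟩
      set G : BoundedContinuousFunction (carrier S) ℝ :=
        ⟨⟨fun s => g (L ((s : X → X))),
          g.continuous.comp (hLcont.comp continuous_subtype_val)⟩, hgbdd⟩ with hG
      -- `G` as a finite combination of the `F`'s
      have hGsum : G = ∑ p : ↥u,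
          g (e p) • F (p : X × (X →L[ℝ] ℝ)).1 (p : X × (X →L[ℝ] ℝ)).2 := by
        ext s
        rw [BoundedContinuousFunction.coe_sum]
        show g (L ((s : X → X))) = _
        rw [hdecomp (L ((s : X → X)))]
        rw [Finset.sum_apply]
        congr 1
        funext p
        rw [BoundedContinuousFunction.coe_smul]
        show L ((s : X → X)) p * g (e p) = g (e p) * (F _ _) s
        rw [hLapp, hFapp, mul_comm]
      have hmG : m G = g v := by
        rw [hGsum, map_sum, hdecomp v]
        congr 1
        funext p
        rw [map_smul, smul_eq_mul, mul_comm]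
      -- positivity bound
      have hup : m G ≤ c := by
        have h0 : 0 ≤ m (c • (1 : BoundedContinuousFunction (carrier S) ℝ) - G) := by
          apply hpos
          intro t
          have ht : G t < c := by
            have : L ((t : X → X)) ∈ D := ⟨(t : X → X), carrier_subset_K t.2, rfl⟩
            exact hlt _ this
          simp only [BoundedContinuousFunction.coe_sub,
            BoundedContinuousFunction.coe_smul, BoundedContinuousFunction.coe_one,
            Pi.sub_apply, Pi.smul_apply, Pi.one_apply, smul_eq_mul, mul_one]
          linarith
        rw [map_sub, map_smul, hone, smul_eq_mul, mul_one] at h0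
        linarith
      rw [hmG] at hup
      linarith
    obtain ⟨f, hfK, hLf⟩ := hvD
    refine ⟨f, hfK, ?_⟩
    simp only [mem_iInter]
    intro p hp
    have := congrFun hLf (⟨p, hp⟩ : ↥u)
    rw [hLapp] at this
    exact this
  obtain ⟨Q, hQK, hQZ⟩ :=
    (K_compact horb).inter_iInter_nonempty Z hZclosed hfin
  rw [mem_iInter] at hQZ
  have hQval : ∀ (x : X) (φ : X →L[ℝ] ℝ), φ (Q x) = m (F x φ) := by
    intro x φ
    exact hQZ (x, φ)
  refine ⟨Q, hQK, ?_⟩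
  rintro _ ⟨A, hA, rfl⟩ x
  by_contra hcon
  -- invariance of the barycenter under left translation by `A`
  have hkey : ∀ φ : X →L[ℝ] ℝ, φ (A (Q x)) = φ (Q x) := by
    intro φ
    have h1 : φ (A (Q x)) = (φ.comp (A.restrictScalars ℝ)) (Q x) := rfl
    rw [h1, hQval x (φ.comp (A.restrictScalars ℝ)), hQval x φ]
    apply hinv ⟨(A : X → X), ⟨A, hA, rfl⟩⟩ (F x φ)
    intro t h
    rfl
  obtain ⟨φ, hφ⟩ := geometric_hahn_banach_point_point hcon
  rw [hkey φ] at hφ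
  exact lt_irrefl _ hφ

/-- For a left amenable operator semigroup `𝒮` on a Hausdorff
locally convex space with relatively compact convex orbits, a net `(T_α)` in
`K(co 𝒮)` is a left ergodic net for `𝒮` iff all of its cluster points (in the
topology of pointwise convergence) belong to the kernel of `K(co 𝒮)`. -/
theorem leftErgodicNet_iff_clusterPt_kernel (S : Set (X →L[ℂ] X))
    (hsemi : ∀ a ∈ S, ∀ b ∈ S, a ∘L b ∈ S)
    (hamen : IsLeftAmenableSet (carrier S))
    (horb : ∀ x : X, IsCompact (closure ((fun R : X → X => R x) '' convS S)))
    {ι : Type*} (l : Filter ι) (hl : l.NeBot) (T : ι → X → X)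
    (hT : ∀ i, T i ∈ KohlerConv S) :
    (∀ x : X, ∀ A ∈ S, Tendsto (fun i => T i x - A (T i x)) l (𝓝 0)) ↔
      ∀ R : X → X, MapClusterPt R l T → R ∈ semigroupKernel (KohlerConv S) := by
  rcases Set.eq_empty_or_nonempty (carrier S) with hS | hne
  · exfalso
    have hKempty : KohlerConv S = ∅ := by
      simp [KohlerConv, convS, hS, convexHull_empty, closure_empty]
    obtain ⟨i⟩ := hl.nonempty
    have := hT i
    rw [hKempty] at this
    exact this
  obtain ⟨Q, hQK, hQfix⟩ := exists_invariant hsemi hamen horb hne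
  constructor
  · -- ergodic net ⇒ cluster points in the kernel
    intro herg R hR
    -- `R ∈ K`
    have hRK : R ∈ KohlerConv S := by
      have hle : map T l ≤ 𝓟 (KohlerConv S) :=
        le_principal_iff.2 (mem_map.2 (Eventually.of_forall hT))
      have : ClusterPt R (𝓟 (KohlerConv S)) := (hR.clusterPt).mono hle
      have := mem_closure_iff_clusterPt.2 this
      rwa [(K_isClosed S).closure_eq] at this
    -- `A ∘ R = R` for all `A ∈ S`
    have hfixR : ∀ s ∈ carrier S, ∀ x, s (R x) = R x := by
      rintro _ ⟨A, hA, rfl⟩ x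
      have h1 : Tendsto (fun i => T i x - A (T i x)) l (𝓝 0) := herg x A hA
      have hc : ContinuousAt (fun f : X → X => f x - A (f x)) R :=
        ((continuous_apply x).sub (A.continuous.comp (continuous_apply x))).continuousAt
      have h2 : MapClusterPt (R x - A (R x)) l
          ((fun f : X → X => f x - A (f x)) ∘ T) :=
        MapClusterPt.continuousAt_comp hc hR
      have h3 : ClusterPt (R x - A (R x))
          (map (fun i => T i x - A (T i x)) l) := h2.clusterPt
      have h4 : map (fun i => T i x - A (T i x)) l ≤ 𝓝 (0 : X) := h1
      haveI : (map (fun i => T i x - A (T i x)) l).NeBot := map_neBot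
      have h5 : (𝓝 (R x - A (R x)) ⊓ 𝓝 (0 : X)).NeBot :=
        (h3.neBot).mono (inf_le_inf_left _ h4)
      have h6 : R x - A (R x) = 0 := eq_of_nhds_neBot h5
      have := sub_eq_zero.1 h6
      exact this.symm
    -- `R` belongs to every ideal
    intro I hI
    obtain ⟨⟨b, hbI⟩, hIK, hid⟩ := hI
    have hbR : b ∘ R = R := funext fun x => fixedExtend hfixR (hIK hbI) x
    have : b ∘ R ∈ I := (hid R hRK b hbI).2
    rwa [hbR] at this
  · -- cluster points in the kernel ⇒ ergodic net
    intro hker x A hA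
    have hQfixK : ∀ c ∈ KohlerConv S, ∀ y, c (Q y) = Q y :=
      fun c hc => fixedExtend hQfix hc
    -- the two-sided ideal `Q ∘ K`
    set I0 : Set (X → X) := (fun R : X → X => Q ∘ R) '' KohlerConv S with hI0
    have hI0ideal : IsIdealOf (KohlerConv S) I0 := by
      refine ⟨⟨Q ∘ Q, ⟨Q, hQK, rfl⟩⟩, ?_, ?_⟩
      · rintro _ ⟨R, hR, rfl⟩
        exact comp_memK hsemi hQK hR
      · rintro a ha _ ⟨R, hR, rfl⟩
        constructor
        · refine ⟨R, hR, ?_⟩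
          have haQ : a ∘ Q = Q := funext fun y => hQfixK a ha y
          show Q ∘ R = a ∘ (Q ∘ R)
          calc Q ∘ R = (a ∘ Q) ∘ R := by rw [haQ]
            _ = a ∘ (Q ∘ R) := rfl
        · exact ⟨R ∘ a, comp_memK hsemi hR ha, rfl⟩
    -- proof of convergence by contradiction
    by_contra hnot
    obtain ⟨U, hU, hUev⟩ : ∃ U ∈ 𝓝 (0 : X),
        ¬ ∀ᶠ i in l, T i x - A (T i x) ∈ U := by
      by_contra h
      push_neg at h
      exact hnot fun U hU => h U hU
    obtain ⟨t, htn, htc, hts⟩ := exists_mem_nhds_isClosed_subset hU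
    set V : Set X := interior t with hV
    have hVn : V ∈ 𝓝 (0 : X) := interior_mem_nhds.2 htn
    have hclV : closure V ⊆ U := by
      calc closure V ⊆ closure t := closure_mono interior_subset
        _ = t := htc.closure_eq
        _ ⊆ U := hts
    have hfreq : ∃ᶠ i in l, T i x - A (T i x) ∉ closure V := by
      have : ∃ᶠ i in l, T i x - A (T i x) ∉ U := by
        rw [Filter.not_eventually] at hUev
        exact hUev
      exact this.mono fun i hi h' => hi (hclV h')
    set l' : Filter ι := l ⊓ 𝓟 {i | T i x - A (T i x) ∉ closure V} with hl'
    haveI hl'ne : l'.NeBot := frequently_iff_neBot.1 hfreq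
    -- get a cluster point of `T` along `l'`
    have hmapK : map T l' ≤ 𝓟 (KohlerConv S) :=
      le_principal_iff.2 (mem_map.2 (Eventually.of_forall hT))
    obtain ⟨R, hRK, hRcl⟩ := (K_compact horb).exists_mapClusterPt hmapK
    have hRker : R ∈ semigroupKernel (KohlerConv S) :=
      hker R (hRcl.mono inf_le_left)
    have hRI0 : R ∈ I0 := hRker I0 hI0ideal
    obtain ⟨R', hR', rfl⟩ := hRI0
    -- `A` fixes `R = Q ∘ R'` pointwise
    have hfix : A ((Q ∘ R') x) = (Q ∘ R') x := hQfix _ ⟨A, hA, rfl⟩ (R' x)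
    -- `0` is a cluster point of the evaluated net along `l'`
    have hc : ContinuousAt (fun f : X → X => f x - A (f x)) (Q ∘ R') :=
      ((continuous_apply x).sub (A.continuous.comp (continuous_apply x))).continuousAt
    have h2 : MapClusterPt ((Q ∘ R') x - A ((Q ∘ R') x)) l'
        ((fun f : X → X => f x - A (f x)) ∘ T) :=
      MapClusterPt.continuousAt_comp hc hRcl
    rw [hfix, sub_self] at h2
    -- but the evaluated net avoids `closure V` along `l'`
    have hle : map ((fun f : X → X => f x - A (f x)) ∘ T) l' ≤ 𝓟 (closure V)ᶜ := by
      refine le_principal_iff.2 (mem_map.2 ?_)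
      have : {i | T i x - A (T i x) ∉ closure V} ∈ l' :=
        mem_inf_of_right (mem_principal_self _)
      exact Filter.mem_of_superset this fun i hi => hi
    have h0cl : (0 : X) ∈ closure ((closure V)ᶜ) :=
      mem_closure_iff_clusterPt.2 ((h2.clusterPt).mono hle)
    obtain ⟨y, hyV, hyc⟩ :=
      mem_closure_iff.1 h0cl V isOpen_interior (mem_of_mem_nhds hVn)
    exact hyc (subset_closure hyV)

end Stmt17
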